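/- arXiv:2107.06444 — 3 statements merged into one kernel-verified Lean document; each statement's English description precedes it below -/
import Mathlib

section
/- Let A be any poset, H a Hilbert space, and (H_a)_{a∈A} a monotone family of closed subspaces of H. If (H_a)_{a∈A} is decomposable, then it satisfies the intersection property: for all a, b ∈ A, π({c ∈ A : c ≤ a and c ≤ b}) = π_a ∘ π_b. -/
open Submodule

variable {𝕜 E : Type*} [RCLike 𝕜] [NormedAddCommGroup E] [InnerProductSpace 𝕜 E]
  [CompleteSpace E]

/-- The orthogonal projection of `E` onto the topological closure of `K`,
as a continuous linear map `E →L[𝕜] E`. -/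
noncomputable def projC (K : Submodule 𝕜 E) : E →L[𝕜] E :=
  haveI : CompleteSpace K.topologicalClosure :=
    K.isClosed_topologicalClosure.completeSpace_coe
  K.topologicalClosure.subtypeL.comp (orthogonalProjection K.topologicalClosure)

/-- `π(B)`: the orthogonal projection onto the closed span of the `H b`, `b ∈ B`. -/
noncomputable def piProj {A : Type*} [PartialOrder A] (H : A → Submodule 𝕜 E)
    (B : Set A) : E →L[𝕜] E :=
  projC (⨆ b ∈ B, H b)

/-- A monotone family `(H_a)_{a ∈ A}` of closed subspaces of `E` is decomposable if there is
a family `(S_a)_{a ∈ A⁺}` of pairwise orthogonal closed subspaces whose total closed span is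
`E` and whose partial closed spans over `{b ≤ a}` recover each `H_a`. -/
def Decomposable {A : Type*} [PartialOrder A] (H : A → Submodule 𝕜 E) : Prop :=
  ∃ S : WithTop A → Submodule 𝕜 E,
    (∀ a, IsClosed ((S a : Submodule 𝕜 E) : Set E)) ∧
    (∀ a b, a ≠ b → ∀ u ∈ S a, ∀ v ∈ S b, (inner 𝕜 u v : 𝕜) = 0) ∧
    (⨆ a, S a).topologicalClosure = ⊤ ∧
    (∀ a : A, (⨆ b ∈ {b : A | b ≤ a}, S (b : WithTop A)).topologicalClosure = H a)

lemma projC_apply_eq_self {K : Submodule 𝕜 E} {x : E} (hx : x ∈ K.topologicalClosure) :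
    projC K x = x := by
  haveI : CompleteSpace K.topologicalClosure :=
    K.isClosed_topologicalClosure.completeSpace_coe
  simp only [projC, ContinuousLinearMap.comp_apply, Submodule.subtypeL_apply]
  exact Submodule.starProjection_eq_self_iff.mpr hx

lemma projC_apply_eq_zero {K : Submodule 𝕜 E} {x : E} (hx' : x ∈ K.topologicalClosureᗮ) :
    projC K x = 0 := by
  haveI : CompleteSpace K.topologicalClosure :=
    K.isClosed_topologicalClosure.completeSpace_coe
  simp only [projC, ContinuousLinearMap.comp_apply, Submodule.subtypeL_apply]
  rw [Submodule.orthogonalProjectionOnto_apply_of_mem_orthogonal hx']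
  simp

/-- Over any poset, a decomposable monotone family of closed subspaces
satisfies the intersection property `π({c ≤ a ∧ c ≤ b}) = π_a ∘ π_b`. -/
theorem intersectionProperty_of_decomposable
    {A : Type*} [PartialOrder A]
    (H : A → Submodule 𝕜 E)
    (hclosed : ∀ a, IsClosed ((H a : Submodule 𝕜 E) : Set E))
    (hmono : Monotone H)
    (hdec : Decomposable H) :
    ∀ a b : A,
      piProj H {c | c ≤ a ∧ c ≤ b} =
        (piProj H {c | c ≤ a}).comp (piProj H {c | c ≤ b}) := by
  obtain ⟨S, hSc, horth, htot, hH⟩ := hdec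
  -- closure identification for downward closed sets
  have key : ∀ B : Set A, (∀ c ∈ B, ∀ d, d ≤ c → d ∈ B) →
      (⨆ c ∈ B, H c).topologicalClosure
        = (⨆ d ∈ B, S (d : WithTop A)).topologicalClosure := by
    intro B hB
    apply le_antisymm
    · refine Submodule.topologicalClosure_minimal _ ?_
        (Submodule.isClosed_topologicalClosure _)
      refine iSup_le fun c => iSup_le fun hc => ?_
      rw [← hH c]
      apply Submodule.topologicalClosure_mono
      refine iSup_le fun d => iSup_le fun hd => ?_
      exact le_iSup_of_le d (le_iSup_of_le (hB c hc d hd) le_rfl)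
    · refine Submodule.topologicalClosure_minimal _ ?_
        (Submodule.isClosed_topologicalClosure _)
      refine iSup_le fun d => iSup_le fun hd => ?_
      have h1 : S (d : WithTop A) ≤ H d := by
        rw [← hH d]
        exact le_trans (le_iSup₂ (f := fun b (_ : b ∈ {b : A | b ≤ d}) => S (b : WithTop A)) d le_rfl)
          (Submodule.le_topologicalClosure _)
      exact h1.trans (le_trans (le_iSup₂ (f := fun c (_ : c ∈ B) => H c) d hd)
        (Submodule.le_topologicalClosure _))
  -- fix lemma
  have fixQ : ∀ (B : Set A), (∀ c ∈ B, ∀ d, d ≤ c → d ∈ B) →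
      ∀ (c : A), c ∈ B → ∀ x ∈ S (c : WithTop A), piProj H B x = x := by
    intro B hB c hc x hx
    apply projC_apply_eq_self
    rw [key B hB]
    exact Submodule.le_topologicalClosure _
      (Submodule.mem_iSup_of_mem c (Submodule.mem_iSup_of_mem hc hx))
  -- kill lemma
  have killQ : ∀ (B : Set A), (∀ c ∈ B, ∀ d, d ≤ c → d ∈ B) →
      ∀ (e : WithTop A), (∀ d ∈ B, (d : WithTop A) ≠ e) →
      ∀ x ∈ S e, piProj H B x = 0 := by
    intro B hB e he x hx
    apply projC_apply_eq_zero
    have horthS : x ∈ (⨆ d ∈ B, S (d : WithTop A))ᗮ := by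
      rw [Submodule.mem_orthogonal]
      intro u hu
      rw [iSup_subtype'] at hu
      refine Submodule.iSup_induction (motive := fun u => (inner 𝕜 u x : 𝕜) = 0)
        (fun d : {d // d ∈ B} => S ((d : A) : WithTop A)) hu ?_ (by simp) ?_
      · intro d u hu
        exact horth _ _ (he d d.2) u hu x hx
      · intro u v h1 h2; rw [inner_add_left, h1, h2, add_zero]
    rw [key B hB, ← Submodule.orthogonal_orthogonal_eq_closure,
      Submodule.triorthogonal_eq_orthogonal]
    exact horthS
  intro a b
  have hBab : ∀ c ∈ {c : A | c ≤ a ∧ c ≤ b}, ∀ d, d ≤ c → d ∈ {c : A | c ≤ a ∧ c ≤ b} :=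
    fun c hc d hd => ⟨hd.trans hc.1, hd.trans hc.2⟩
  have hBa : ∀ c ∈ {c : A | c ≤ a}, ∀ d, d ≤ c → d ∈ {c : A | c ≤ a} :=
    fun c hc d hd => hd.trans hc
  have hBb : ∀ c ∈ {c : A | c ≤ b}, ∀ d, d ≤ c → d ∈ {c : A | c ≤ b} :=
    fun c hc d hd => hd.trans hc
  refine ContinuousLinearMap.ext_on (s := ((⨆ i, S i : Submodule 𝕜 E) : Set E)) ?_ ?_
  · rw [Submodule.span_eq]
    exact Submodule.dense_iff_topologicalClosure_eq_top.mpr htot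
  · intro x hx
    simp only [SetLike.mem_coe] at hx
    refine Submodule.iSup_induction (motive := fun x => piProj H {c | c ≤ a ∧ c ≤ b} x =
      ((piProj H {c | c ≤ a}).comp (piProj H {c | c ≤ b})) x) S hx ?_ (by simp) ?_
    · intro i x hxi
      simp only [ContinuousLinearMap.comp_apply]
      induction i using WithTop.recTopCoe with
      | top =>
        rw [killQ _ hBab ⊤ (fun d _ => WithTop.coe_ne_top) x hxi,
            killQ _ hBb ⊤ (fun d _ => WithTop.coe_ne_top) x hxi, map_zero]
      | coe c =>
        by_cases hcb : c ≤ b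
        · rw [fixQ _ hBb c hcb x hxi]
          by_cases hca : c ≤ a
          · rw [fixQ _ hBab c ⟨hca, hcb⟩ x hxi, fixQ _ hBa c hca x hxi]
          · rw [killQ _ hBab (c : WithTop A) (fun d hd hdc => hca (WithTop.coe_inj.mp hdc ▸ hd.1)) x hxi,
                killQ _ hBa (c : WithTop A) (fun d hd hdc => hca (WithTop.coe_inj.mp hdc ▸ hd)) x hxi]
        · rw [killQ _ hBab (c : WithTop A) (fun d hd hdc => hcb (WithTop.coe_inj.mp hdc ▸ hd.2)) x hxi,
              killQ _ hBb (c : WithTop A) (fun d hd hdc => hcb (WithTop.coe_inj.mp hdc ▸ hd)) x hxi, map_zero]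
    · intro u v h1 h2
      simp only [map_add, h1, h2]
end

section
/- Let A be any poset, H a Hilbert space, and (H_a)_{a∈A} a monotone family of closed subspaces of H satisfying the intersection property. Then the subspaces S_a := H_a ∩ ⋂_{b∈A⁺, b<a} H_b^⊥ (a ∈ A⁺) are pairwise orthogonal; equivalently, the orthogonal projections s_a^⊥ onto S_a satisfy s_a^⊥ ∘ s_b^⊥ = 0 whenever a ≠ b, and s_a^⊥ ∘ s_a^⊥ = s_a^⊥. -/
open Submodule

variable {𝕜 E : Type*} [RCLike 𝕜] [NormedAddCommGroup E] [InnerProductSpace 𝕜 E]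
  [CompleteSpace E]

/-- The intersection property: `π({c ≤ a} ∩ {c ≤ b}) = π_a ∘ π_b`. -/
def IntersectionProperty {A : Type*} [PartialOrder A] (H : A → Submodule 𝕜 E) : Prop :=
  ∀ a b : A,
    piProj H {c | c ≤ a ∧ c ≤ b} =
      (piProj H {c | c ≤ a}).comp (piProj H {c | c ≤ b})

/-- The extension of the family `(H_a)_{a ∈ A}` to `A⁺ = WithTop A`, sending the added
greatest element `⊤` to the whole space. -/
def extFam {A : Type*} [PartialOrder A] (H : A → Submodule 𝕜 E) :
    WithTop A → Submodule 𝕜 E :=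
  fun x => WithTop.recTopCoe ⊤ H x

/-- `S_a := H_a ∩ ⋂_{b ∈ A⁺, b < a} H_b^⊥` for `a ∈ A⁺`. -/
def interactionSub {A : Type*} [PartialOrder A] (H : A → Submodule 𝕜 E)
    (a : WithTop A) : Submodule 𝕜 E :=
  extFam H a ⊓ ⨅ b ∈ {b : WithTop A | b < a}, (extFam H b)ᗮ

/- ### Auxiliary lemmas -/

lemma projC_apply_mem (K : Submodule 𝕜 E) (x : E) : projC K x ∈ K.topologicalClosure := by
  haveI : CompleteSpace K.topologicalClosure :=
    K.isClosed_topologicalClosure.completeSpace_coe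
  exact (orthogonalProjection K.topologicalClosure x).2

lemma projC_eq_self (K : Submodule 𝕜 E) {x : E} (hx : x ∈ K.topologicalClosure) :
    projC K x = x := by
  haveI : CompleteSpace K.topologicalClosure :=
    K.isClosed_topologicalClosure.completeSpace_coe
  exact (Submodule.starProjection_eq_self_iff (K := K.topologicalClosure)).mpr hx

lemma mem_orthogonal_topologicalClosure {K : Submodule 𝕜 E} {x : E} (hx : x ∈ Kᗮ) :
    x ∈ K.topologicalClosureᗮ := by
  rw [← K.orthogonal_orthogonal_eq_closure]
  exact Kᗮ.le_orthogonal_orthogonal hx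

lemma projC_eq_zero (K : Submodule 𝕜 E) {x : E} (hx : x ∈ Kᗮ) : projC K x = 0 := by
  haveI : CompleteSpace K.topologicalClosure :=
    K.isClosed_topologicalClosure.completeSpace_coe
  have := orthogonalProjection_mem_subspace_orthogonalComplement_eq_zero
    (mem_orthogonal_topologicalClosure hx)
  simp [projC, this]

lemma projC_inner_left_eq_right (K : Submodule 𝕜 E) (u v : E) :
    (inner 𝕜 (projC K u) v : 𝕜) = inner 𝕜 u (projC K v) := by
  haveI : CompleteSpace K.topologicalClosure :=
    K.isClosed_topologicalClosure.completeSpace_coe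
  exact K.topologicalClosure.inner_starProjection_left_eq_right u v

lemma closure_biSup_le_eq {A : Type*} [PartialOrder A] (H : A → Submodule 𝕜 E)
    (hclosed : ∀ a, IsClosed ((H a : Submodule 𝕜 E) : Set E)) (hmono : Monotone H) (a : A) :
    (⨆ b ∈ {c : A | c ≤ a}, H b).topologicalClosure = H a := by
  apply le_antisymm
  · exact topologicalClosure_minimal _ (iSup₂_le fun c hc => hmono hc) (hclosed a)
  · calc H a ≤ ⨆ b ∈ {c : A | c ≤ a}, H b := le_iSup₂ (f := fun (b : A) (_ : b ∈ {c : A | c ≤ a}) => H b) a (show a ∈ {c : A | c ≤ a} from le_refl a)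
      _ ≤ _ := le_topologicalClosure _

lemma key_orth {A : Type*} [PartialOrder A] (H : A → Submodule 𝕜 E)
    (hclosed : ∀ a, IsClosed ((H a : Submodule 𝕜 E) : Set E)) (hmono : Monotone H)
    (hint : IntersectionProperty H) {a b : A} (hab : ¬ a ≤ b)
    {u v : E} (hu : u ∈ H a) (hu' : ∀ c : A, c < a → u ∈ (H c)ᗮ) (hv : v ∈ H b) :
    (inner 𝕜 u v : 𝕜) = 0 := by
  have huS : u ∈ (⨆ c ∈ {c : A | c ≤ a ∧ c ≤ b}, H c)ᗮ := by
    have h1 : (⨆ c ∈ {c : A | c ≤ a ∧ c ≤ b}, H c) ≤ (𝕜 ∙ u)ᗮ := by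
      refine iSup₂_le fun c hc => fun y hy => ?_
      rw [Submodule.mem_orthogonal_singleton_iff_inner_right]
      have hca : c < a := lt_of_le_of_ne hc.1 (fun h => hab (h ▸ hc.2))
      exact Submodule.inner_left_of_mem_orthogonal hy (hu' c hca)
    exact Submodule.orthogonal_le h1
      ((𝕜 ∙ u).le_orthogonal_orthogonal (Submodule.mem_span_singleton_self u))
  have hfixu : piProj H {c | c ≤ a} u = u :=
    projC_eq_self _ ((closure_biSup_le_eq H hclosed hmono a).symm ▸ hu)
  have hfixv : piProj H {c | c ≤ b} v = v :=
    projC_eq_self _ ((closure_biSup_le_eq H hclosed hmono b).symm ▸ hv)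
  have hva : piProj H {c | c ≤ a} v = piProj H {c | c ≤ a ∧ c ≤ b} v := by
    have h3 := congrArg (fun f : E →L[𝕜] E => f v) (hint a b)
    simp only [ContinuousLinearMap.comp_apply, hfixv] at h3
    exact h3.symm
  calc (inner 𝕜 u v : 𝕜) = inner 𝕜 (piProj H {c | c ≤ a} u) v := by rw [hfixu]
    _ = inner 𝕜 u (piProj H {c | c ≤ a} v) :=
        projC_inner_left_eq_right (⨆ c ∈ {c : A | c ≤ a}, H c) u v
    _ = inner 𝕜 u (piProj H {c | c ≤ a ∧ c ≤ b} v) := by rw [hva]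
    _ = 0 := Submodule.inner_left_of_mem_orthogonal
        (projC_apply_mem _ v) (mem_orthogonal_topologicalClosure huS)

lemma mem_interactionSub {A : Type*} [PartialOrder A] {H : A → Submodule 𝕜 E}
    {a : WithTop A} {u : E} (hu : u ∈ interactionSub H a) :
    u ∈ extFam H a ∧ ∀ c : WithTop A, c < a → u ∈ (extFam H c)ᗮ := by
  obtain ⟨h1, h2⟩ := hu
  refine ⟨h1, fun c hc => ?_⟩
  exact (Submodule.mem_iInf _).mp ((Submodule.mem_iInf _).mp h2 c) hc

/-- If a monotone family of closed subspaces satisfies the intersection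
property, then the subspaces `S_a = H_a ∩ ⋂_{b < a} H_b^⊥` (for `a ∈ A⁺`) are pairwise
orthogonal; equivalently, the orthogonal projections `s_a^⊥` onto the `S_a` satisfy
`s_a^⊥ ∘ s_b^⊥ = 0` for `a ≠ b` and `s_a^⊥ ∘ s_a^⊥ = s_a^⊥`. -/
theorem interactionSub_pairwise_orthogonal_of_intersectionProperty
    {A : Type*} [PartialOrder A]
    (H : A → Submodule 𝕜 E)
    (hclosed : ∀ a, IsClosed ((H a : Submodule 𝕜 E) : Set E))
    (hmono : Monotone H)
    (hint : IntersectionProperty H) :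
    (∀ a b : WithTop A, a ≠ b →
        ∀ u ∈ interactionSub H a, ∀ v ∈ interactionSub H b, (inner 𝕜 u v : 𝕜) = 0) ∧
    (∀ a b : WithTop A, a ≠ b →
        (projC (interactionSub H a)).comp (projC (interactionSub H b)) = 0) ∧
    (∀ a : WithTop A,
        (projC (interactionSub H a)).comp (projC (interactionSub H a)) =
          projC (interactionSub H a)) := by
  have main : ∀ a b : WithTop A, a ≠ b →
      ∀ u ∈ interactionSub H a, ∀ v ∈ interactionSub H b, (inner 𝕜 u v : 𝕜) = 0 := by
    intro a b hab u hu v hv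
    obtain ⟨hu1, hu2⟩ := mem_interactionSub hu
    obtain ⟨hv1, hv2⟩ := mem_interactionSub hv
    by_cases h1 : b < a
    · exact Submodule.inner_left_of_mem_orthogonal hv1 (hu2 b h1)
    by_cases h2 : a < b
    · exact Submodule.inner_right_of_mem_orthogonal hu1 (hv2 a h2)
    have hab1 : ¬ a ≤ b := fun h => h2 (lt_of_le_of_ne h hab)
    have hab2 : ¬ b ≤ a := fun h => h1 (lt_of_le_of_ne h (Ne.symm hab))
    cases a with
    | top => exact absurd le_top hab2
    | coe a' =>
      cases b with
      | top => exact absurd le_top hab1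
      | coe b' =>
        refine key_orth H hclosed hmono hint
          (fun h => hab1 (WithTop.coe_le_coe.mpr h)) hu1 (fun c hc => ?_) hv1
        exact hu2 ↑c (WithTop.coe_lt_coe.mpr hc)
  have hle : ∀ a b : WithTop A, a ≠ b →
      (interactionSub H b).topologicalClosure ≤ (interactionSub H a)ᗮ := by
    intro a b hab
    refine topologicalClosure_minimal _ (fun v hv => ?_)
      (interactionSub H a).isClosed_orthogonal
    exact ((interactionSub H a).mem_orthogonal v).mpr fun u hu => main a b hab u hu v hv
  refine ⟨main, fun a b hab => ?_, fun a => ?_⟩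
  · ext x
    have hx : projC (interactionSub H b) x ∈ (interactionSub H b).topologicalClosure :=
      projC_apply_mem _ x
    have : projC (interactionSub H b) x ∈ (interactionSub H a)ᗮ := hle a b hab hx
    simpa using projC_eq_zero _ this
  · ext x
    exact projC_eq_self _ (projC_apply_mem _ x)
end

section
/- There is no coproduct of countably many copies of the ground field in the category of Hilbert spaces and continuous linear maps: there do not exist a Hilbert space C over 𝕜 (𝕜 = ℝ or ℂ) and a sequence of continuous linear maps (η_n : 𝕜 → C)_{n∈ℕ} such that for every Hilbert space W over 𝕜 and every sequence of continuous linear maps (φ_n : 𝕜 → W)_{n∈ℕ} there exists a continuous linear map φ : C → W with φ ∘ η_n = φ_n for all n ∈ ℕ. -/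
universe v

instance small_rclike (𝕜 : Type*) [RCLike 𝕜] : Small.{v} 𝕜 := by
  have : FiniteDimensional ℝ 𝕜 := inferInstance
  exact small_of_injective (Module.finBasis ℝ 𝕜).equivFun.injective

section ShrinkHilbert

variable (𝕜 : Type*) [RCLike 𝕜]

/-- The equivalence from the shrunken copy of `𝕜` back to `𝕜`. -/
noncomputable def shrinkEquiv : Shrink.{v} 𝕜 ≃ₗ[𝕜] 𝕜 := Shrink.linearEquiv 𝕜 𝕜

noncomputable instance : NormedAddCommGroup (Shrink.{v} 𝕜) :=
  inferInstance

lemma shrink_norm_def (x : Shrink.{v} 𝕜) : ‖x‖ = ‖shrinkEquiv 𝕜 x‖ := rfl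

noncomputable instance : NormedSpace 𝕜 (Shrink.{v} 𝕜) :=
  inferInstance

noncomputable instance : Inner 𝕜 (Shrink.{v} 𝕜) :=
  ⟨fun x y => inner 𝕜 (shrinkEquiv 𝕜 x) (shrinkEquiv 𝕜 y)⟩

lemma shrink_inner_def (x y : Shrink.{v} 𝕜) :
    (inner 𝕜 x y : 𝕜) = inner 𝕜 (shrinkEquiv 𝕜 x) (shrinkEquiv 𝕜 y) := rfl

noncomputable instance : InnerProductSpace 𝕜 (Shrink.{v} 𝕜) :=
  { (inferInstance : NormedSpace 𝕜 (Shrink.{v} 𝕜)),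
    (inferInstance : Inner 𝕜 (Shrink.{v} 𝕜)) with
    norm_sq_eq_re_inner := fun x => norm_sq_eq_re_inner (𝕜 := 𝕜) (shrinkEquiv 𝕜 x)
    conj_inner_symm := fun x y => inner_conj_symm (𝕜 := 𝕜) (shrinkEquiv 𝕜 x) (shrinkEquiv 𝕜 y)
    add_left := fun x y z => by
      rw [shrink_inner_def, shrink_inner_def, shrink_inner_def, map_add, inner_add_left]
    smul_left := fun x y r => by
      rw [shrink_inner_def, shrink_inner_def, map_smul, inner_smul_left] }

/-- The shrunken copy of `𝕜` is isometric to `𝕜`. -/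
noncomputable def shrinkIsometryEquiv : Shrink.{v} 𝕜 ≃ᵢ 𝕜 where
  toEquiv := (shrinkEquiv 𝕜).toEquiv
  isometry_toFun := AddMonoidHomClass.isometry_of_norm (shrinkEquiv 𝕜).toLinearMap
    fun x => rfl

noncomputable instance : CompleteSpace (Shrink.{v} 𝕜) :=
  (shrinkIsometryEquiv 𝕜).completeSpace

/-- The canonical continuous linear map `𝕜 →L[𝕜] Shrink 𝕜`. -/
noncomputable def toShrinkCLM : 𝕜 →L[𝕜] Shrink.{v} 𝕜 :=
  LinearMap.mkContinuous (Shrink.linearEquiv 𝕜 𝕜).symm.toLinearMap 1 fun x => by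
    rw [one_mul]
    exact le_of_eq (by rw [LinearEquiv.coe_coe, shrink_norm_def, shrinkEquiv,
      LinearEquiv.apply_symm_apply])

lemma shrinkEquiv_toShrinkCLM (x : 𝕜) : shrinkEquiv 𝕜 (toShrinkCLM 𝕜 x) = x := by
  simp [toShrinkCLM, shrinkEquiv]

end ShrinkHilbert

set_option maxHeartbeats 1000000
set_option synthInstance.maxHeartbeats 400000

/-- There is no coproduct of countably many copies of the ground field
`𝕜` in the category of Hilbert spaces and continuous linear maps: no Hilbert space `C`
with structure maps `η_n : 𝕜 → C` satisfies the (existence part of the) universal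
property of the coproduct. -/
theorem no_countable_coproduct_of_hilbert
    {𝕜 : Type*} [RCLike 𝕜]
    (C : Type*) [NormedAddCommGroup C] [InnerProductSpace 𝕜 C] [CompleteSpace C]
    (η : ℕ → (𝕜 →L[𝕜] C)) :
    ¬ (∀ (W : Type*) [NormedAddCommGroup W] [InnerProductSpace 𝕜 W] [CompleteSpace W]
        (φ : ℕ → (𝕜 →L[𝕜] W)), ∃ ψ : C →L[𝕜] W, ∀ n, ψ.comp (η n) = φ n) := by
  intro h
  obtain ⟨ψ, hψ⟩ := h (Shrink 𝕜)
    (fun n => (((n : ℝ) * (‖η n 1‖ + 1) : ℝ) : 𝕜) • toShrinkCLM 𝕜)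
  obtain ⟨n, hn⟩ := exists_nat_gt ‖ψ‖
  have h1 : shrinkEquiv 𝕜 (ψ (η n 1)) = (((n : ℝ) * (‖η n 1‖ + 1) : ℝ) : 𝕜) := by
    have := congrArg (fun f : 𝕜 →L[𝕜] Shrink 𝕜 => shrinkEquiv 𝕜 (f 1)) (hψ n)
    simpa [map_smul, shrinkEquiv_toShrinkCLM] using this
  have h2 : ‖ψ (η n 1)‖ ≤ ‖ψ‖ * ‖η n 1‖ := ψ.le_opNorm _
  rw [shrink_norm_def, h1] at h2
  have h3 : ‖(((n : ℝ) * (‖η n 1‖ + 1) : ℝ) : 𝕜)‖ = (n : ℝ) * (‖η n 1‖ + 1) := by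
    rw [RCLike.norm_ofReal, abs_of_nonneg]
    positivity
  rw [h3] at h2
  have hpos : (0 : ℝ) < ‖η n 1‖ + 1 := by positivity
  have h4 : (n : ℝ) * (‖η n 1‖ + 1) ≤ ‖ψ‖ * (‖η n 1‖ + 1) := by
    calc (n : ℝ) * (‖η n 1‖ + 1) ≤ ‖ψ‖ * ‖η n 1‖ := h2
    _ ≤ ‖ψ‖ * (‖η n 1‖ + 1) := by
        have : (0:ℝ) ≤ ‖ψ‖ := norm_nonneg _
        nlinarith
  have := le_of_mul_le_mul_right h4 hpos
  linarith
end
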